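/- Let F be a field, d and n positive integers, and Q a regular n×n matrix polynomial over F with deg(det Q) = d·n. Then there exists a strictly regular n×n matrix polynomial P over F of degree d that is unimodularly equivalent to Q. -/

import Mathlib

open Polynomial

/-- Unimodular equivalence of square matrix polynomials. -/
def UnimodEquiv {F : Type*} [Field F] {n : ℕ}
    (P Q : Matrix (Fin n) (Fin n) F[X]) : Prop :=
  ∃ U V : Matrix (Fin n) (Fin n) F[X], IsUnit U.det ∧ IsUnit V.det ∧ Q = U * P * V

/-- The coefficient matrix of `λ^d` in the entries of `P`. -/
def leadMat {F : Type*} [Field F] {n : ℕ} (P : Matrix (Fin n) (Fin n) F[X]) (d : ℕ) :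
    Matrix (Fin n) (Fin n) F :=
  Matrix.of fun i j => (P i j).coeff d

/-- `P` is a nonzero matrix polynomial of degree `d`. -/
def MatDegEq {F : Type*} [Field F] {m n : ℕ} (P : Matrix (Fin m) (Fin n) F[X]) (d : ℕ) : Prop :=
  (∀ i j, (P i j).degree ≤ (d : WithBot ℕ)) ∧ ∃ i j, (P i j).degree = (d : WithBot ℕ)

namespace S3

open Matrix

variable {F : Type*} [Field F] {n : ℕ}

/-- The matrix of `γ j`-th coefficients of the columns of `T`. -/
noncomputable def Gam (T : Matrix (Fin n) (Fin n) F[X]) (γ : Fin n → ℕ) :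
    Matrix (Fin n) (Fin n) F :=
  Matrix.of fun r j => (T r j).coeff (γ j)

/-- Normal form: column `j` has monic diagonal entry of degree `γ j` and all
off-diagonal entries of strictly smaller degree. -/
def NF (T : Matrix (Fin n) (Fin n) F[X]) (γ : Fin n → ℕ) : Prop :=
  (∀ j, (T j j).Monic ∧ (T j j).degree = (γ j : WithBot ℕ)) ∧
    ∀ r j, r ≠ j → (T r j).degree < (γ j : WithBot ℕ)

lemma wb_lt_succ {x : WithBot ℕ} {k : ℕ} :
    x < (((k + 1 : ℕ)) : WithBot ℕ) ↔ x ≤ ((k : ℕ) : WithBot ℕ) := by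
  rw [Nat.cast_withBot, Nat.cast_withBot]
  cases x with
  | bot => exact iff_of_true (by exact_mod_cast WithBot.bot_lt_coe (k + 1)) bot_le
  | coe a =>
    rw [WithBot.coe_lt_coe, WithBot.coe_le_coe]
    exact Nat.lt_succ_iff

lemma coeff_mul_of_degree_le {p q : F[X]} {a b : ℕ}
    (hp : p.degree ≤ (a : WithBot ℕ)) (hq : q.degree ≤ (b : WithBot ℕ)) :
    (p * q).coeff (a + b) = p.coeff a * q.coeff b := by
  rw [Polynomial.coeff_mul]
  rw [Finset.sum_eq_single ((a, b) : ℕ × ℕ)]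
  · rintro ⟨x, y⟩ hmem hne
    replace hmem : x + y = a + b := by simpa using hmem
    have hxy : x ≠ a ∨ y ≠ b := by
      by_contra hcon
      push_neg at hcon
      exact hne (by simp [hcon.1, hcon.2])
    rcases lt_or_ge a x with hx | hx
    · rw [Polynomial.coeff_eq_zero_of_degree_lt
        (lt_of_le_of_lt hp (by exact_mod_cast hx)), zero_mul]
    · have hy : b < y := by omega
      rw [Polynomial.coeff_eq_zero_of_degree_lt
        (lt_of_le_of_lt hq (by exact_mod_cast hy)), mul_zero]
  · intro hmem
    simp [Finset.mem_antidiagonal] at hmem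

lemma degree_prod_le_sum {ι : Type*} (s : Finset ι) (f : ι → F[X]) (γ : ι → ℕ)
    (h : ∀ i ∈ s, (f i).degree ≤ ((γ i : ℕ) : WithBot ℕ)) :
    (∏ i ∈ s, f i).degree ≤ ((∑ i ∈ s, γ i : ℕ) : WithBot ℕ) := by
  refine le_trans (Polynomial.degree_prod_le s f) ?_
  rw [Nat.cast_sum]
  exact Finset.sum_le_sum h

lemma coeff_prod_of_degree_le {ι : Type*} (s : Finset ι) (f : ι → F[X]) (γ : ι → ℕ)
    (h : ∀ i ∈ s, (f i).degree ≤ ((γ i : ℕ) : WithBot ℕ)) :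
    (∏ i ∈ s, f i).coeff (∑ i ∈ s, γ i) = ∏ i ∈ s, (f i).coeff (γ i) := by
  classical
  induction s using Finset.cons_induction with
  | empty => simp
  | cons i s his ih =>
    rw [Finset.prod_cons, Finset.sum_cons, Finset.prod_cons]
    rw [coeff_mul_of_degree_le (h i (Finset.mem_cons_self i s))
      (degree_prod_le_sum s f γ (fun j hj => h j (Finset.mem_cons_of_mem hj)))]
    rw [ih (fun j hj => h j (Finset.mem_cons_of_mem hj))]

lemma degree_det_le (T : Matrix (Fin n) (Fin n) F[X]) (γ : Fin n → ℕ)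
    (h : ∀ r j, (T r j).degree ≤ ((γ j : ℕ) : WithBot ℕ)) :
    T.det.degree ≤ ((∑ j, γ j : ℕ) : WithBot ℕ) := by
  rw [Matrix.det_apply]
  refine le_trans (Polynomial.degree_sum_le _ _) ?_
  refine Finset.sup_le fun σ _ => ?_
  have h1 : (Equiv.Perm.sign σ • ∏ i, T (σ i) i) = ((Equiv.Perm.sign σ : ℤ) : F[X]) * ∏ i, T (σ i) i := by
    rw [Units.smul_def, zsmul_eq_mul]
  rw [h1]
  refine le_trans (Polynomial.degree_mul_le _ _) ?_
  have h2 : (((Equiv.Perm.sign σ : ℤ) : F[X])).degree ≤ 0 := Polynomial.degree_intCast_le _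
  calc (((Equiv.Perm.sign σ : ℤ) : F[X])).degree + (∏ i, T (σ i) i).degree
      ≤ 0 + ((∑ j, γ j : ℕ) : WithBot ℕ) :=
        add_le_add h2 (degree_prod_le_sum _ _ _ (fun j _ => h (σ j) j))
    _ = ((∑ j, γ j : ℕ) : WithBot ℕ) := zero_add _

lemma coeff_det (T : Matrix (Fin n) (Fin n) F[X]) (γ : Fin n → ℕ)
    (h : ∀ r j, (T r j).degree ≤ ((γ j : ℕ) : WithBot ℕ)) :
    T.det.coeff (∑ j, γ j) = (Gam T γ).det := by
  rw [Matrix.det_apply, Matrix.det_apply, Polynomial.finset_sum_coeff]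
  refine Finset.sum_congr rfl fun σ _ => ?_
  rw [Polynomial.coeff_smul]
  congr 1
  exact coeff_prod_of_degree_le _ _ _ (fun j _ => h (σ j) j)

lemma degree_lt_of_coeff_zero (p : F[X]) (a : ℕ) (h1 : p.degree ≤ (a : WithBot ℕ))
    (h2 : p.coeff a = 0) : p.degree < (a : WithBot ℕ) := by
  rcases eq_or_ne p 0 with rfl | hp0
  · rw [Polynomial.degree_zero]
    exact WithBot.bot_lt_coe a
  · refine lt_of_le_of_ne h1 fun hdeg => ?_
    have hnd : p.natDegree = a := Polynomial.natDegree_eq_of_degree_eq_some hdeg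
    have := Polynomial.leadingCoeff_ne_zero.mpr hp0
    rw [Polynomial.leadingCoeff, hnd, h2] at this
    exact this rfl

lemma monic_of_coeff_one (p : F[X]) (a : ℕ) (h1 : p.degree ≤ (a : WithBot ℕ))
    (h2 : p.coeff a = 1) : p.Monic ∧ p.degree = (a : WithBot ℕ) := by
  have hne : p.coeff a ≠ 0 := by rw [h2]; exact one_ne_zero
  have hge : (a : WithBot ℕ) ≤ p.degree := Polynomial.le_degree_of_ne_zero hne
  have hdeg : p.degree = (a : WithBot ℕ) := le_antisymm h1 hge
  have hnd : p.natDegree = a := Polynomial.natDegree_eq_of_degree_eq_some hdeg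
  refine ⟨?_, hdeg⟩
  rw [Polynomial.Monic, Polynomial.leadingCoeff, hnd, h2]

lemma det_one_add_col (u : Fin n → F[X]) (k : Fin n) (hu : u k = 0) :
    (Matrix.of fun r j : Fin n =>
      (1 : Matrix (Fin n) (Fin n) F[X]) r j +
        u r * (1 : Matrix (Fin n) (Fin n) F[X]) k j).det = 1 := by
  have h := Matrix.det_eq_of_forall_row_eq_smul_add_const
    (B := (1 : Matrix (Fin n) (Fin n) F[X])) u k hu (fun i j => rfl)
  exact h.trans Matrix.det_one

lemma det_one_add_row (w : Fin n → F[X]) (k : Fin n) (hw : w k = 0) :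
    (Matrix.of fun r j : Fin n =>
      (1 : Matrix (Fin n) (Fin n) F[X]) r j +
        (1 : Matrix (Fin n) (Fin n) F[X]) r k * w j).det = 1 := by
  rw [← Matrix.det_transpose]
  have heq : (Matrix.of fun r j : Fin n =>
      (1 : Matrix (Fin n) (Fin n) F[X]) r j +
        (1 : Matrix (Fin n) (Fin n) F[X]) r k * w j)ᵀ =
      Matrix.of fun r j : Fin n =>
        (1 : Matrix (Fin n) (Fin n) F[X]) r j +
          w r * (1 : Matrix (Fin n) (Fin n) F[X]) k j := by
    ext a b
    simp only [Matrix.transpose_apply, Matrix.of_apply, Matrix.one_apply]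
    have e1 : (if b = a then (1 : F[X]) else 0) = if a = b then 1 else 0 := by
      simp only [eq_comm]
    have e2 : (if b = k then (1 : F[X]) else 0) = if k = b then 1 else 0 := by
      simp only [eq_comm]
    rw [e1, e2, mul_comm]
  rw [heq]
  exact det_one_add_col w k hw

lemma div_mul_bound {q : F[X]} (hq : q.Monic) (p g : F[X]) (b a c : ℕ)
    (hqd : q.degree = (b : WithBot ℕ)) (hp : p.degree < ((a : ℕ) : WithBot ℕ))
    (hg : g.degree ≤ ((c : ℕ) : WithBot ℕ)) (hba : b ≤ a) :
    ((p /ₘ q) * g).degree < (((a + c - b : ℕ)) : WithBot ℕ) := by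
  rcases eq_or_ne (p /ₘ q) 0 with h0 | h0
  · rw [h0, zero_mul, Polynomial.degree_zero]
    exact WithBot.bot_lt_coe _
  · have hqh : q * (p /ₘ q) = p - p %ₘ q := by
      rw [eq_sub_iff_add_eq, add_comm]
      exact Polynomial.modByMonic_add_div p q
    have hdqh : (q * (p /ₘ q)).degree = (p /ₘ q).degree + (b : WithBot ℕ) := by
      rw [mul_comm, hq.degree_mul, hqd]
    have hlt : (q * (p /ₘ q)).degree < (a : WithBot ℕ) := by
      rw [hqh]
      refine lt_of_le_of_lt (Polynomial.degree_sub_le _ _) (max_lt hp ?_)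
      refine lt_of_lt_of_le (Polynomial.degree_modByMonic_lt p hq) ?_
      rw [hqd]
      exact_mod_cast hba
    have hdd : (p /ₘ q).degree = ((p /ₘ q).natDegree : WithBot ℕ) :=
      Polynomial.degree_eq_natDegree h0
    rw [hdqh, hdd] at hlt
    have hnat : (p /ₘ q).natDegree + b < a := by exact_mod_cast hlt
    refine lt_of_le_of_lt (Polynomial.degree_mul_le _ _) ?_
    rw [hdd]
    have hstep : ((p /ₘ q).natDegree : WithBot ℕ) + g.degree ≤
        (((p /ₘ q).natDegree + c : ℕ) : WithBot ℕ) := by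
      push_cast
      exact add_le_add le_rfl hg
    refine lt_of_le_of_lt hstep ?_
    exact_mod_cast (by omega : (p /ₘ q).natDegree + c < a + c - b)

lemma norm_step (T : Matrix (Fin n) (Fin n) F[X]) (γ : Fin n → ℕ)
    (hb : ∀ r j, (T r j).degree ≤ ((γ j : ℕ) : WithBot ℕ))
    (hu : IsUnit (Gam T γ).det) :
    ∃ M : Matrix (Fin n) (Fin n) F[X], IsUnit M.det ∧ NF (M * T) γ := by
  classical
  set Γ : Matrix (Fin n) (Fin n) F := Gam T γ with hΓ
  set M : Matrix (Fin n) (Fin n) F[X] := Γ⁻¹.map (Polynomial.C : F →+* F[X]) with hM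
  have hMdet : M.det = Polynomial.C (Γ⁻¹.det) := by
    rw [hM, ← RingHom.mapMatrix_apply, RingHom.map_det]
  have hentry : ∀ r j, (M * T) r j = ∑ s, Polynomial.C (Γ⁻¹ r s) * T s j := by
    intro r j
    rw [Matrix.mul_apply]
    refine Finset.sum_congr rfl fun s _ => ?_
    rw [hM, Matrix.map_apply]
  have hdeg : ∀ r j, ((M * T) r j).degree ≤ ((γ j : ℕ) : WithBot ℕ) := by
    intro r j
    rw [hentry]
    refine le_trans (Polynomial.degree_sum_le _ _) (Finset.sup_le fun s _ => ?_)
    refine le_trans (Polynomial.degree_mul_le _ _) ?_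
    calc (Polynomial.C (Γ⁻¹ r s)).degree + (T s j).degree
        ≤ 0 + ((γ j : ℕ) : WithBot ℕ) := add_le_add Polynomial.degree_C_le (hb s j)
      _ = ((γ j : ℕ) : WithBot ℕ) := zero_add _
  have hco : ∀ r j, ((M * T) r j).coeff (γ j) = (1 : Matrix (Fin n) (Fin n) F) r j := by
    intro r j
    rw [hentry, Polynomial.finset_sum_coeff]
    have hterm : ∀ s, (Polynomial.C (Γ⁻¹ r s) * T s j).coeff (γ j) = Γ⁻¹ r s * Γ s j := by
      intro s
      rw [Polynomial.coeff_C_mul]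
      rfl
    rw [Finset.sum_congr rfl fun s _ => hterm s]
    calc ∑ s, Γ⁻¹ r s * Γ s j = (Γ⁻¹ * Γ) r j := (Matrix.mul_apply).symm
      _ = (1 : Matrix (Fin n) (Fin n) F) r j := by rw [Matrix.nonsing_inv_mul Γ hu]
  refine ⟨M, ?_, fun j => ?_, fun r j hrj => ?_⟩
  · rw [hMdet]
    exact (Matrix.isUnit_nonsing_inv_det Γ hu).map (Polynomial.C : F →+* F[X])
  · exact monic_of_coeff_one _ _ (hdeg j j) (by rw [hco]; simp [Matrix.one_apply])
  · exact degree_lt_of_coeff_zero _ _ (hdeg r j) (by rw [hco]; simp [Matrix.one_apply, hrj])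

lemma NF_det_monic {T : Matrix (Fin n) (Fin n) F[X]} {γ : Fin n → ℕ} (h : NF T γ) :
    T.det.Monic ∧ T.det.degree = ((∑ j, γ j : ℕ) : WithBot ℕ) := by
  classical
  have hb : ∀ r j, (T r j).degree ≤ ((γ j : ℕ) : WithBot ℕ) := by
    intro r j
    rcases eq_or_ne r j with rfl | hrj
    · exact le_of_eq (h.1 r).2
    · exact le_of_lt (h.2 r j hrj)
  have hG : Gam T γ = 1 := by
    ext r j
    rcases eq_or_ne r j with rfl | hrj
    · have h2 := (h.1 r).2
      have hnd : (T r r).natDegree = γ r := Polynomial.natDegree_eq_of_degree_eq_some h2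
      simpa [Gam, Matrix.one_apply, ← hnd] using (h.1 r).1.coeff_natDegree
    · simp [Gam, Matrix.one_apply, hrj,
        Polynomial.coeff_eq_zero_of_degree_lt (h.2 r j hrj)]
  have hc : T.det.coeff (∑ j, γ j) = 1 := by
    rw [coeff_det T γ hb, hG, Matrix.det_one]
  exact monic_of_coeff_one _ _ (degree_det_le T γ hb) hc

noncomputable def colD (T : Matrix (Fin n) (Fin n) F[X]) (j : Fin n) : ℕ :=
  Finset.univ.sup fun r => (T r j).natDegree

lemma degree_le_colD (T : Matrix (Fin n) (Fin n) F[X]) (r j : Fin n) :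
    (T r j).degree ≤ ((colD T j : ℕ) : WithBot ℕ) := by
  refine le_trans (Polynomial.degree_le_natDegree) ?_
  exact_mod_cast Finset.le_sup (f := fun r => (T r j).natDegree) (Finset.mem_univ r)

lemma colred_aux : ∀ N : ℕ, ∀ T : Matrix (Fin n) (Fin n) F[X], T.det ≠ 0 →
    ∑ j, colD T j = N →
    ∃ (U V : Matrix (Fin n) (Fin n) F[X]) (γ : Fin n → ℕ),
      IsUnit U.det ∧ IsUnit V.det ∧ NF (U * T * V) γ := by
  intro N
  induction N using Nat.strong_induction_on with
  | _ N IH =>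
  intro T hT hN
  classical
  by_cases hu : IsUnit (Gam T (colD T)).det
  · obtain ⟨M, hM, hNF⟩ := norm_step T (colD T) (degree_le_colD T) hu
    refine ⟨M, 1, colD T, hM, by simp, ?_⟩
    rw [Matrix.mul_one]
    exact hNF
  · have hdet0 : (Gam T (colD T)).det = 0 := by
      by_contra hcon
      exact hu (isUnit_iff_ne_zero.mpr hcon)
    obtain ⟨c, hc0, hck⟩ := Matrix.exists_mulVec_eq_zero_iff.mpr hdet0
    set γ : Fin n → ℕ := colD T with hγ
    have hsupp : (Finset.univ.filter fun j => c j ≠ 0).Nonempty := by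
      obtain ⟨j, hj⟩ := Function.ne_iff.mp hc0
      refine ⟨j, ?_⟩
      simpa using hj
    obtain ⟨j₀, hj₀mem, hj₀max⟩ := Finset.exists_max_image _ γ hsupp
    have hcj₀ : c j₀ ≠ 0 := by simpa using hj₀mem
    set cc : Fin n → F := fun s => (c j₀)⁻¹ * c s with hcc
    have hccj₀ : cc j₀ = 1 := inv_mul_cancel₀ hcj₀
    set u : Fin n → F[X] := fun s =>
      if s = j₀ then 0 else Polynomial.C (cc s) * Polynomial.X ^ (γ j₀ - γ s) with hu_def
    have huj₀ : u j₀ = 0 := by simp [hu_def]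
    set V : Matrix (Fin n) (Fin n) F[X] := Matrix.of fun r j =>
      (1 : Matrix (Fin n) (Fin n) F[X]) r j +
        u r * (1 : Matrix (Fin n) (Fin n) F[X]) j₀ j with hV
    have hVdet : V.det = 1 := det_one_add_col u j₀ huj₀
    have hTV : ∀ r j, (T * V) r j =
        T r j + (∑ s, T r s * u s) * (1 : Matrix (Fin n) (Fin n) F[X]) j₀ j := by
      intro r j
      rw [Matrix.mul_apply]
      have hterm : ∀ s ∈ Finset.univ, T r s * V s j =
          T r s * (1 : Matrix (Fin n) (Fin n) F[X]) s j +
            T r s * u s * (1 : Matrix (Fin n) (Fin n) F[X]) j₀ j := by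
        intro s _
        rw [hV]
        simp only [Matrix.of_apply]
        ring
      rw [Finset.sum_congr rfl hterm, Finset.sum_add_distrib, ← Finset.sum_mul]
      congr 1
      have h1 : (∑ s, T r s * (1 : Matrix (Fin n) (Fin n) F[X]) s j) =
          (T * (1 : Matrix (Fin n) (Fin n) F[X])) r j := (Matrix.mul_apply).symm
      rw [h1, Matrix.mul_one]
    have hcol_ne : ∀ r j, j ≠ j₀ → (T * V) r j = T r j := by
      intro r j hj
      rw [hTV, Matrix.one_apply_ne (Ne.symm hj), mul_zero, add_zero]
    have hcol_j₀ : ∀ r, (T * V) r j₀ = T r j₀ + ∑ s, T r s * u s := by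
      intro r
      rw [hTV, Matrix.one_apply_eq, mul_one]
    -- degree bound on the new column
    have hu_deg : ∀ r s, (T r s * u s).degree ≤ ((γ j₀ : ℕ) : WithBot ℕ) := by
      intro r s
      rcases eq_or_ne s j₀ with rfl | hs
      · simp [hu_def]
      · by_cases hcs : c s = 0
        · simp [hu_def, hs, hcc, hcs]
        · have hmem : s ∈ Finset.univ.filter fun j => c j ≠ 0 := by simp [hcs]
          have hle : γ s ≤ γ j₀ := hj₀max s hmem
          have h1 : (u s).degree ≤ ((γ j₀ - γ s : ℕ) : WithBot ℕ) := by
            rw [hu_def]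
            simp only [hs, if_false]
            refine le_trans (Polynomial.degree_mul_le _ _) ?_
            calc (Polynomial.C (cc s)).degree + (Polynomial.X ^ (γ j₀ - γ s) : F[X]).degree
                ≤ 0 + ((γ j₀ - γ s : ℕ) : WithBot ℕ) :=
                  add_le_add Polynomial.degree_C_le (le_of_eq (Polynomial.degree_X_pow _))
              _ = _ := zero_add _
          refine le_trans (Polynomial.degree_mul_le _ _) ?_
          calc (T r s).degree + (u s).degree
              ≤ ((γ s : ℕ) : WithBot ℕ) + ((γ j₀ - γ s : ℕ) : WithBot ℕ) :=
                add_le_add (degree_le_colD T r s) h1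
            _ = ((γ j₀ : ℕ) : WithBot ℕ) := by
                rw [← Nat.cast_add]
                congr 1
                omega
    have hdeg_j₀ : ∀ r, ((T * V) r j₀).degree ≤ ((γ j₀ : ℕ) : WithBot ℕ) := by
      intro r
      rw [hcol_j₀]
      refine le_trans (Polynomial.degree_add_le _ _) (max_le (degree_le_colD T r j₀) ?_)
      exact le_trans (Polynomial.degree_sum_le _ _) (Finset.sup_le fun s _ => hu_deg r s)
    -- coefficient of the new column vanishes
    have hco_j₀ : ∀ r, ((T * V) r j₀).coeff (γ j₀) = 0 := by
      intro r
      rw [hcol_j₀, Polynomial.coeff_add, Polynomial.finset_sum_coeff]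
      have hterm : ∀ s, (T r s * u s).coeff (γ j₀) =
          if s = j₀ then 0 else cc s * Gam T γ r s := by
        intro s
        rcases eq_or_ne s j₀ with rfl | hs
        · simp [hu_def]
        · rw [if_neg hs]
          by_cases hcs : c s = 0
          · simp [hu_def, hs, hcc, hcs]
          · have hmem : s ∈ Finset.univ.filter fun j => c j ≠ 0 := by simp [hcs]
            have hle : γ s ≤ γ j₀ := hj₀max s hmem
            have heq : T r s * u s =
                Polynomial.C (cc s) * (Polynomial.X ^ (γ j₀ - γ s) * T r s) := by
              rw [hu_def]
              simp only [hs, if_false]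
              ring
            rw [heq, Polynomial.coeff_C_mul]
            have h2 : (Polynomial.X ^ (γ j₀ - γ s) * T r s).coeff (γ j₀) =
                (T r s).coeff (γ s) := by
              generalize he : γ j₀ - γ s = e
              have h3 : γ j₀ = γ s + e := by omega
              rw [h3, Polynomial.coeff_X_pow_mul]
            rw [h2]
            rfl
      rw [Finset.sum_congr rfl fun s _ => hterm s]
      have hsplit : (∑ s, if s = j₀ then 0 else cc s * Gam T γ r s) =
          (∑ s, cc s * Gam T γ r s) - cc j₀ * Gam T γ r j₀ := by
        rw [← Finset.add_sum_erase _ (fun s => if s = j₀ then (0:F) else cc s * Gam T γ r s)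
          (Finset.mem_univ j₀), if_pos rfl, zero_add]
        rw [← Finset.add_sum_erase _ (fun s => cc s * Gam T γ r s) (Finset.mem_univ j₀)]
        rw [Finset.sum_congr rfl fun s hs => if_neg (Finset.ne_of_mem_erase hs)]
        ring
      rw [hsplit, hccj₀, one_mul]
      have hGr : (T r j₀).coeff (γ j₀) = Gam T γ r j₀ := rfl
      rw [hGr]
      have hker : (∑ s, cc s * Gam T γ r s) = 0 := by
        have h4 : (Gam T γ *ᵥ c) r = 0 := by rw [hck]; rfl
        have h5 : (Gam T γ *ᵥ c) r = ∑ s, Gam T γ r s * c s := by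
          simp [Matrix.mulVec, dotProduct]
        calc (∑ s, cc s * Gam T γ r s) = (c j₀)⁻¹ * ∑ s, Gam T γ r s * c s := by
              rw [Finset.mul_sum]
              refine Finset.sum_congr rfl fun s _ => ?_
              rw [hcc]
              ring
          _ = 0 := by rw [← h5, h4, mul_zero]
      rw [hker]
      ring
    have hdlt : ∀ r, ((T * V) r j₀).degree < ((γ j₀ : ℕ) : WithBot ℕ) := fun r =>
      degree_lt_of_coeff_zero _ _ (hdeg_j₀ r) (hco_j₀ r)
    have hdetTV : (T * V).det = T.det := by rw [Matrix.det_mul, hVdet, mul_one]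
    have hTV0 : (T * V).det ≠ 0 := by rw [hdetTV]; exact hT
    have hj₀pos : 0 < γ j₀ := by
      by_contra hcon
      push_neg at hcon
      have hz : γ j₀ = 0 := by omega
      have hzero : ∀ r, (T * V) r j₀ = 0 := by
        intro r
        have h6 := hdlt r
        rw [hz] at h6
        rw [← Polynomial.degree_eq_bot]
        exact Nat.WithBot.lt_zero_iff.mp (by exact_mod_cast h6)
      exact hTV0 (Matrix.det_eq_zero_of_column_eq_zero j₀ hzero)
    have hcd_ne : ∀ j, j ≠ j₀ → colD (T * V) j = colD T j := by
      intro j hj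
      unfold colD
      exact Finset.sup_congr rfl fun r _ => by rw [hcol_ne r j hj]
    have hcd_j₀ : colD (T * V) j₀ ≤ γ j₀ - 1 := by
      refine Finset.sup_le fun r _ => ?_
      rcases eq_or_ne ((T * V) r j₀) 0 with h0 | h0
      · rw [h0]
        simp only [Polynomial.natDegree_zero]
        omega
      · have hlt := hdlt r
        rw [Polynomial.degree_eq_natDegree h0] at hlt
        have : ((T * V) r j₀).natDegree < γ j₀ := by exact_mod_cast hlt
        omega
    have hsum_lt : ∑ j, colD (T * V) j < N := by
      rw [← hN]
      refine Finset.sum_lt_sum (fun j _ => ?_) ⟨j₀, Finset.mem_univ _, ?_⟩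
      · rcases eq_or_ne j j₀ with rfl | hj
        · calc colD (T * V) j ≤ γ j - 1 := hcd_j₀
            _ ≤ colD T j := by
              have hjj : γ j = colD T j := rfl
              omega
        · rw [hcd_ne j hj]
      · calc colD (T * V) j₀ ≤ γ j₀ - 1 := hcd_j₀
          _ < colD T j₀ := by
            have : γ j₀ = colD T j₀ := rfl
            omega
    obtain ⟨U', V', γ', hU', hV', hNF'⟩ := IH _ hsum_lt (T * V) hTV0 rfl
    refine ⟨U', V * V', γ', hU', ?_, ?_⟩
    · rw [Matrix.det_mul, hVdet, one_mul]
      exact hV'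
    · have hassoc : U' * (T * V) * V' = U' * T * (V * V') := by
        simp only [Matrix.mul_assoc]
      rw [← hassoc]
      exact hNF'

/-- Column reduction. -/
lemma colred (T : Matrix (Fin n) (Fin n) F[X]) (hT : T.det ≠ 0) :
    ∃ (U V : Matrix (Fin n) (Fin n) F[X]) (γ : Fin n → ℕ),
      IsUnit U.det ∧ IsUnit V.det ∧ NF (U * T * V) γ :=
  colred_aux _ T hT rfl

lemma wb_one_add_lt {x : WithBot ℕ} {k : ℕ} (h : x < ((k : ℕ) : WithBot ℕ)) :
    1 + x < (((k + 1 : ℕ)) : WithBot ℕ) := by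
  cases x with
  | bot =>
    rw [WithBot.add_bot]
    exact_mod_cast WithBot.bot_lt_coe (k + 1)
  | coe a =>
    have ha : a < k := by
      rw [Nat.cast_withBot] at h
      exact_mod_cast h
    have e : (1 : WithBot ℕ) + (WithBot.some a) = ((1 + a : ℕ) : WithBot ℕ) := by
      norm_cast
    rw [e, Nat.cast_withBot, Nat.cast_withBot, WithBot.coe_lt_coe]
    omega

lemma balance_aux (d : ℕ) : ∀ K : ℕ, ∀ (T : Matrix (Fin n) (Fin n) F[X]) (γ : Fin n → ℕ),
    NF T γ → (∑ j, γ j = d * n) → (∑ j, (γ j - d)) = K →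
    ∃ U V : Matrix (Fin n) (Fin n) F[X],
      IsUnit U.det ∧ IsUnit V.det ∧ NF (U * T * V) (fun _ => d) := by
  intro K
  induction K using Nat.strong_induction_on with
  | _ K IH =>
  intro T γ hNF hsum hK
  classical
  rcases Nat.eq_zero_or_pos K with rfl | hKpos
  · -- base case: all degrees equal d
    have hle : ∀ j, γ j ≤ d := by
      intro j
      have h0 : γ j - d = 0 := Finset.sum_eq_zero_iff.mp hK j (Finset.mem_univ j)
      omega
    have hall : ∀ j, γ j = d := by
      by_contra hcon
      push_neg at hcon
      obtain ⟨j₁, hj₁⟩ := hcon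
      have hlt : γ j₁ < d := lt_of_le_of_ne (hle j₁) hj₁
      have hslt : ∑ j, γ j < ∑ _j : Fin n, d :=
        Finset.sum_lt_sum (fun j _ => hle j) ⟨j₁, Finset.mem_univ _, hlt⟩
      rw [Finset.sum_const, Finset.card_univ, Fintype.card_fin, smul_eq_mul] at hslt
      have hcomm : d * n = n * d := Nat.mul_comm d n
      omega
    have hγd : γ = fun _ => d := funext hall
    refine ⟨1, 1, by simp, by simp, ?_⟩
    rw [Matrix.one_mul, Matrix.mul_one, ← hγd]
    exact hNF
  · -- inductive step
    have hm : ∃ m, d < γ m := by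
      by_contra hcon
      push_neg at hcon
      have h0 : ∀ j ∈ Finset.univ, γ j - d = 0 := fun j _ => by have := hcon j; omega
      rw [Finset.sum_congr rfl h0, Finset.sum_const_zero] at hK
      omega
    obtain ⟨m, hdm⟩ := hm
    obtain ⟨i, -, himin'⟩ := Finset.exists_min_image Finset.univ γ ⟨m, Finset.mem_univ m⟩
    have himin : ∀ j, γ i ≤ γ j := fun j => himin' j (Finset.mem_univ j)
    have hid : γ i < d := by
      by_contra hcon
      push_neg at hcon
      have hslt : ∑ _j : Fin n, d < ∑ j, γ j :=
        Finset.sum_lt_sum (fun j _ => le_trans hcon (himin j)) ⟨m, Finset.mem_univ _, hdm⟩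
      rw [Finset.sum_const, Finset.card_univ, Fintype.card_fin, smul_eq_mul] at hslt
      have hcomm : d * n = n * d := Nat.mul_comm d n
      omega
    have him : i ≠ m := by
      intro h
      rw [h] at hid
      omega
    obtain ⟨hDiag, hOff⟩ := hNF
    have hd_le : ∀ r j, (T r j).degree ≤ ((γ j : ℕ) : WithBot ℕ) := by
      intro r j
      rcases eq_or_ne r j with rfl | hrj
      · exact le_of_eq (hDiag r).2
      · exact le_of_lt (hOff r j hrj)
    -- the row operation U₁ : add X * (row i) to row m
    set uu : Fin n → F[X] := fun r => if r = m then Polynomial.X else 0 with huu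
    have huui : uu i = 0 := by simp [huu, him]
    set U₁ : Matrix (Fin n) (Fin n) F[X] := Matrix.of fun r j =>
      (1 : Matrix (Fin n) (Fin n) F[X]) r j +
        uu r * (1 : Matrix (Fin n) (Fin n) F[X]) i j with hU₁
    have hU₁det : U₁.det = 1 := det_one_add_col uu i huui
    set T1 : Matrix (Fin n) (Fin n) F[X] := U₁ * T with hT1def
    have hone : ∀ (a b : Fin n), (∑ s, (1 : Matrix (Fin n) (Fin n) F[X]) a s * T s b) = T a b := by
      intro a b
      have h1 : (∑ s, (1 : Matrix (Fin n) (Fin n) F[X]) a s * T s b) =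
          ((1 : Matrix (Fin n) (Fin n) F[X]) * T) a b := (Matrix.mul_apply).symm
      rw [h1, Matrix.one_mul]
    have hT1 : ∀ r j, T1 r j = T r j + uu r * T i j := by
      intro r j
      rw [hT1def, Matrix.mul_apply]
      have hterm : ∀ s ∈ Finset.univ, U₁ r s * T s j =
          (1 : Matrix (Fin n) (Fin n) F[X]) r s * T s j +
            uu r * ((1 : Matrix (Fin n) (Fin n) F[X]) i s * T s j) := by
        intro s _
        rw [hU₁]
        simp only [Matrix.of_apply]
        ring
      rw [Finset.sum_congr rfl hterm, Finset.sum_add_distrib, ← Finset.mul_sum, hone, hone]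
    have hT1ne : ∀ r j, r ≠ m → T1 r j = T r j := by
      intro r j hr
      rw [hT1]
      simp [huu, hr]
    have hT1m : ∀ j, T1 m j = T m j + Polynomial.X * T i j := by
      intro j
      rw [hT1]
      simp [huu]
    -- the pivot q = T1 m i is monic of degree γ i + 1
    have hdX : (Polynomial.X * T i i).degree = ((γ i + 1 : ℕ) : WithBot ℕ) := by
      rw [Polynomial.degree_mul, Polynomial.degree_X, (hDiag i).2, Nat.cast_add, Nat.cast_one,
        add_comm]
    have hTmi_lt : (T m i).degree < (Polynomial.X * T i i).degree := by
      rw [hdX]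
      refine lt_of_lt_of_le (hOff m i (Ne.symm him)) ?_
      exact_mod_cast Nat.le_succ (γ i)
    have hq_monic : (T1 m i).Monic := by
      rw [hT1m i]
      exact Polynomial.Monic.add_of_right ((Polynomial.monic_X).mul (hDiag i).1) hTmi_lt
    have hq_deg : (T1 m i).degree = ((γ i + 1 : ℕ) : WithBot ℕ) := by
      rw [hT1m i, Polynomial.degree_add_eq_right_of_degree_lt hTmi_lt, hdX]
    -- degree of the modified row m
    have hA5 : ∀ j, j ≠ i → (T1 m j).degree < ((γ j + 1 : ℕ) : WithBot ℕ) := by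
      intro j hj
      rw [hT1m j]
      refine lt_of_le_of_lt (Polynomial.degree_add_le _ _) (max_lt ?_ ?_)
      · exact lt_of_le_of_lt (hd_le m j) (by exact_mod_cast Nat.lt_succ_self (γ j))
      · rw [Polynomial.degree_mul, Polynomial.degree_X]
        exact wb_one_add_lt (hOff i j (Ne.symm hj))
    -- the column operations V₂
    set hpoly : Fin n → F[X] := fun j => if j = i then 0 else T1 m j /ₘ T1 m i with hh
    set ww : Fin n → F[X] := fun j => -(hpoly j) with hww
    have hwi : ww i = 0 := by simp [hww, hh]
    set V₂ : Matrix (Fin n) (Fin n) F[X] := Matrix.of fun r j =>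
      (1 : Matrix (Fin n) (Fin n) F[X]) r j +
        (1 : Matrix (Fin n) (Fin n) F[X]) r i * ww j with hV₂
    have hV₂det : V₂.det = 1 := det_one_add_row ww i hwi
    set T2 : Matrix (Fin n) (Fin n) F[X] := T1 * V₂ with hT2def
    have hone1 : ∀ (a b : Fin n), (∑ s, T1 a s * (1 : Matrix (Fin n) (Fin n) F[X]) s b) = T1 a b := by
      intro a b
      have h1 : (∑ s, T1 a s * (1 : Matrix (Fin n) (Fin n) F[X]) s b) =
          (T1 * (1 : Matrix (Fin n) (Fin n) F[X])) a b := (Matrix.mul_apply).symm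
      rw [h1, Matrix.mul_one]
    have hT2 : ∀ r j, T2 r j = T1 r j - hpoly j * T1 r i := by
      intro r j
      rw [hT2def, Matrix.mul_apply]
      have hterm : ∀ s ∈ Finset.univ, T1 r s * V₂ s j =
          T1 r s * (1 : Matrix (Fin n) (Fin n) F[X]) s j +
            (T1 r s * (1 : Matrix (Fin n) (Fin n) F[X]) s i) * ww j := by
        intro s _
        rw [hV₂]
        simp only [Matrix.of_apply]
        ring
      rw [Finset.sum_congr rfl hterm, Finset.sum_add_distrib, ← Finset.sum_mul, hone1]
      have h2 : (∑ s, T1 r s * (1 : Matrix (Fin n) (Fin n) F[X]) s i) = T1 r i := hone1 r i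
      rw [h2, hww]
      ring
    -- the new degree profile
    set γ' : Fin n → ℕ := Function.update (Function.update γ i (γ i + 1)) m (γ m - 1) with hγ'
    have hγ'i : γ' i = γ i + 1 := by
      rw [hγ', Function.update_of_ne him, Function.update_self]
    have hγ'm : γ' m = γ m - 1 := by
      rw [hγ', Function.update_self]
    have hγ'o : ∀ j, j ≠ i → j ≠ m → γ' j = γ j := by
      intro j h1 h2
      rw [hγ', Function.update_of_ne h2, Function.update_of_ne h1]
    have hkey : ∀ x : WithBot ℕ, x < ((γ m : ℕ) : WithBot ℕ) → x ≤ ((γ m - 1 : ℕ) : WithBot ℕ) := by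
      intro x hx
      refine wb_lt_succ.mp ?_
      have hge : γ m - 1 + 1 = γ m := by omega
      rw [hge]
      exact hx
    -- column degree bounds for T2
    have hb2 : ∀ r j, (T2 r j).degree ≤ ((γ' j : ℕ) : WithBot ℕ) := by
      have hcoli : ∀ r, (T2 r i).degree ≤ ((γ' i : ℕ) : WithBot ℕ) := by
        intro r
        have he : T2 r i = T1 r i := by
          rw [hT2]
          simp [hh]
        rw [he, hγ'i]
        by_cases hrm : r = m
        · rw [hrm]
          exact le_of_eq hq_deg
        · rw [hT1ne r i hrm]
          refine le_trans (hd_le r i) ?_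
          exact_mod_cast Nat.le_succ (γ i)
      have hrowm : ∀ j, j ≠ i → (T2 m j).degree ≤ ((γ i : ℕ) : WithBot ℕ) := by
        intro j hji
        have hrem : T2 m j = T1 m j %ₘ T1 m i := by
          rw [hT2, hh]
          simp only [hji, if_false]
          have h7 := Polynomial.modByMonic_add_div (T1 m j) (T1 m i)
          linear_combination -h7
        rw [hrem]
        exact wb_lt_succ.mp (lt_of_lt_of_le
          (Polynomial.degree_modByMonic_lt _ hq_monic) (le_of_eq hq_deg))
      have hprod : ∀ r j, j ≠ i → ((hpoly j * T r i).degree < ((γ j : ℕ) : WithBot ℕ)) := by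
        intro r j hji
        have hjlt : γ i + 1 ≤ γ j + 1 := by
          have := himin j
          omega
        have h1 : (hpoly j * T r i).degree <
            ((γ j + 1 + γ i - (γ i + 1) : ℕ) : WithBot ℕ) := by
          rw [hh]
          simp only [hji, if_false]
          exact div_mul_bound hq_monic (T1 m j) (T r i) (γ i + 1) (γ j + 1) (γ i)
            hq_deg (hA5 j hji) (hd_le r i) hjlt
        have hsimp : γ j + 1 + γ i - (γ i + 1) = γ j := by omega
        rw [hsimp] at h1
        exact h1
      intro r j
      by_cases hji : j = i
      · rw [hji]
        exact hcoli r
      · by_cases hrm : r = m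
        · rw [hrm]
          by_cases hjm : j = m
          · rw [hjm] at hji ⊢
            rw [hγ'm]
            refine le_trans (hrowm m hji) ?_
            exact_mod_cast (by omega : γ i ≤ γ m - 1)
          · rw [hγ'o j hji hjm]
            exact le_trans (hrowm j hji) (by exact_mod_cast himin j)
        · have hT2e : T2 r j = T r j - hpoly j * T r i := by
            rw [hT2, hT1ne r j hrm, hT1ne r i hrm]
          by_cases hjm : j = m
          · rw [hjm] at hji hT2e ⊢
            rw [hγ'm, hT2e]
            refine le_trans (Polynomial.degree_sub_le _ _) (max_le ?_ ?_)
            · exact hkey _ (hOff r m hrm)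
            · exact hkey _ (hprod r m hji)
          · rw [hγ'o j hji hjm, hT2e]
            exact le_trans (Polynomial.degree_sub_le _ _)
              (max_le (hd_le r j) (le_of_lt (hprod r j hji)))
    -- sums
    have hsum' : ∑ j, γ' j = ∑ j, γ j := by
      have hi1 : ∀ j ∈ Finset.univ, γ' j + (if j = m then 1 else 0) =
          γ j + (if j = i then 1 else 0) := by
        intro j _
        by_cases h1 : j = i
        · rw [h1, hγ'i, if_neg him, if_pos rfl]
        · by_cases h2 : j = m
          · rw [h2, hγ'm, if_pos rfl, if_neg (Ne.symm him)]
            omega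
          · rw [hγ'o j h1 h2, if_neg h2, if_neg h1]
      have h2 := Finset.sum_congr rfl hi1
      rw [Finset.sum_add_distrib, Finset.sum_add_distrib,
        Finset.sum_ite_eq' Finset.univ m (fun _ => (1:ℕ)),
        Finset.sum_ite_eq' Finset.univ i (fun _ => (1:ℕ))] at h2
      simp only [Finset.mem_univ, if_pos] at h2
      omega
    have hmeas : ∑ j, (γ' j - d) = K - 1 := by
      have hi1 : ∀ j ∈ Finset.univ, (γ' j - d) + (if j = m then 1 else 0) = γ j - d := by
        intro j _
        by_cases h1 : j = i
        · rw [h1, hγ'i, if_neg him]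
          omega
        · by_cases h2 : j = m
          · rw [h2, hγ'm, if_pos rfl]
            omega
          · rw [hγ'o j h1 h2, if_neg h2]
            omega
      have h2 := Finset.sum_congr rfl hi1
      rw [Finset.sum_add_distrib, Finset.sum_ite_eq' Finset.univ m (fun _ => (1:ℕ))] at h2
      simp only [Finset.mem_univ, if_pos] at h2
      omega
    -- renormalize
    have hdetT2 : T2.det = T.det := by
      rw [hT2def, hT1def, Matrix.det_mul, Matrix.det_mul, hU₁det, hV₂det, one_mul, mul_one]
    have hmon := NF_det_monic (⟨hDiag, hOff⟩ : NF T γ)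
    have hcoefdet : T2.det.coeff (∑ j, γ' j) = 1 := by
      rw [hdetT2, hsum']
      have hnd : T.det.natDegree = ∑ j, γ j := Polynomial.natDegree_eq_of_degree_eq_some hmon.2
      rw [← hnd]
      exact hmon.1.coeff_natDegree
    have hGu : IsUnit (Gam T2 γ').det := by
      rw [← coeff_det T2 γ' hb2, hcoefdet]
      exact isUnit_one
    obtain ⟨M, hMu, hNF2⟩ := norm_step T2 γ' hb2 hGu
    have hsumd : ∑ j, γ' j = d * n := by
      rw [hsum']
      exact hsum
    obtain ⟨U', V', hU', hV', hNF3⟩ := IH (K - 1) (by omega) (M * T2) γ' hNF2 hsumd hmeas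
    refine ⟨U' * M * U₁, V₂ * V', ?_, ?_, ?_⟩
    · rw [Matrix.det_mul, Matrix.det_mul, hU₁det, mul_one]
      exact hU'.mul hMu
    · rw [Matrix.det_mul, hV₂det, one_mul]
      exact hV'
    · have hassoc : U' * (M * T2) * V' = (U' * M * U₁) * T * (V₂ * V') := by
        rw [hT2def, hT1def]
        simp only [Matrix.mul_assoc]
      rw [← hassoc]
      exact hNF3

/-- Degree balancing. -/
lemma balance (d : ℕ) (T : Matrix (Fin n) (Fin n) F[X]) (γ : Fin n → ℕ)
    (hNF : NF T γ) (hsum : ∑ j, γ j = d * n) :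
    ∃ U V : Matrix (Fin n) (Fin n) F[X],
      IsUnit U.det ∧ IsUnit V.det ∧ NF (U * T * V) (fun _ => d) :=
  balance_aux d _ T γ hNF hsum rfl

end S3

theorem statement_3 {F : Type*} [Field F] (n d : ℕ) (hn : 0 < n) (hd : 0 < d)
    (Q : Matrix (Fin n) (Fin n) F[X]) (hreg : Q.det ≠ 0)
    (hdet : (Q.det).natDegree = d * n) :
    ∃ P : Matrix (Fin n) (Fin n) F[X],
      MatDegEq P d ∧ IsUnit (leadMat P d).det ∧ UnimodEquiv P Q := by
  classical
  obtain ⟨U₁, V₁, γ, hU₁, hV₁, hNF⟩ := S3.colred Q hreg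
  -- the sum of the γ's is d * n
  have hdm := S3.NF_det_monic hNF
  have hdet1 : (U₁ * Q * V₁).det = U₁.det * Q.det * V₁.det := by
    rw [Matrix.det_mul, Matrix.det_mul]
  have hnd : (U₁ * Q * V₁).det.natDegree = d * n := by
    rw [hdet1]
    rw [Polynomial.natDegree_mul (mul_ne_zero hU₁.ne_zero hreg) hV₁.ne_zero,
      Polynomial.natDegree_mul hU₁.ne_zero hreg]
    rw [Polynomial.natDegree_eq_zero_of_isUnit hU₁, Polynomial.natDegree_eq_zero_of_isUnit hV₁]
    omega
  have hsum : ∑ j, γ j = d * n := by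
    have h1 : (U₁ * Q * V₁).det.natDegree = ∑ j, γ j :=
      Polynomial.natDegree_eq_of_degree_eq_some hdm.2
    omega
  obtain ⟨U₂, V₂, hU₂, hV₂, hNF2⟩ := S3.balance d (U₁ * Q * V₁) γ hNF hsum
  set P : Matrix (Fin n) (Fin n) F[X] := U₂ * (U₁ * Q * V₁) * V₂ with hP
  have hPA : P = (U₂ * U₁) * Q * (V₁ * V₂) := by
    simp only [hP, Matrix.mul_assoc]
  have hAu : IsUnit (U₂ * U₁).det := by rw [Matrix.det_mul]; exact hU₂.mul hU₁
  have hBu : IsUnit (V₁ * V₂).det := by rw [Matrix.det_mul]; exact hV₁.mul hV₂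
  refine ⟨P, ?_, ?_, ?_⟩
  · constructor
    · intro i j
      rcases eq_or_ne i j with rfl | hij
      · exact le_of_eq (hNF2.1 i).2
      · exact le_of_lt (hNF2.2 i j hij)
    · exact ⟨⟨0, hn⟩, ⟨0, hn⟩, (hNF2.1 ⟨0, hn⟩).2⟩
  · have : leadMat P d = 1 := by
      ext r j
      rcases eq_or_ne r j with rfl | hij
      · have h1 := (hNF2.1 r).1
        have h2 := (hNF2.1 r).2
        have : (P r r).natDegree = d := Polynomial.natDegree_eq_of_degree_eq_some h2
        simpa [leadMat, Matrix.one_apply, ← this] using h1.coeff_natDegree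
      · have := hNF2.2 r j hij
        simp [leadMat, Matrix.one_apply, hij, Polynomial.coeff_eq_zero_of_degree_lt this]
    rw [this, Matrix.det_one]
    exact isUnit_one
  · refine ⟨(U₂ * U₁)⁻¹, (V₁ * V₂)⁻¹, Matrix.isUnit_nonsing_inv_det _ hAu,
      Matrix.isUnit_nonsing_inv_det _ hBu, ?_⟩
    rw [hPA, show U₂ * U₁ * Q * (V₁ * V₂) = (U₂ * U₁) * (Q * (V₁ * V₂)) from by
        rw [Matrix.mul_assoc],
      ← Matrix.mul_assoc ((U₂ * U₁)⁻¹) (U₂ * U₁), Matrix.nonsing_inv_mul _ hAu,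
      Matrix.one_mul, Matrix.mul_assoc Q, Matrix.mul_nonsing_inv _ hBu, Matrix.mul_one]
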